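/- Let (V, ν, τ, τ*) be a PN space in which ν(V) ⊆ D⁺ and D⁺ is invariant under τ (i.e., τ(F,G) ∈ D⁺ whenever F, G ∈ D⁺). If a sequence {p_m} strongly converges to p in V, then the set A = {p_m : m ∈ ℕ} is D-bounded. -/

import Mathlib

open Filter Topology

noncomputable section

/-- A distance distribution function: nondecreasing, left-continuous,
vanishing on `(-∞,0]`, bounded by `1`. -/
def DDF (F : ℝ → ℝ) : Prop :=
  Monotone F ∧ (∀ x ≤ 0, F x = 0) ∧ (∀ x, F x ≤ 1) ∧
    ∀ x, Tendsto F (nhdsWithin x (Set.Iio x)) (nhds (F x))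

/-- The unit step at `0`. -/
def eps0 : ℝ → ℝ := fun x => if x ≤ 0 then 0 else 1

/-- The unit step at `c`. -/
def epsc (c : ℝ) : ℝ → ℝ := fun x => if x ≤ c then 0 else 1

/-- `ε∞`: identically 0 on `ℝ` (value 1 only at `+∞`). -/
def epsInf : ℝ → ℝ := fun _ => 0

/-- Membership in `D⁺`: the distribution function tends to `1` at `+∞`. -/
def InDPlus (F : ℝ → ℝ) : Prop := Tendsto F atTop (nhds 1)

/-- Weak convergence of distribution functions. -/
def WeakConv (Fn : ℕ → ℝ → ℝ) (F : ℝ → ℝ) : Prop :=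
  ∀ x, ContinuousAt F x → Tendsto (fun n => Fn n x) atTop (nhds (F x))

/-- A continuous triangle function on `Δ⁺`. -/
def IsTriangleFunction (τ : (ℝ → ℝ) → (ℝ → ℝ) → (ℝ → ℝ)) : Prop :=
  (∀ F G, DDF F → DDF G → DDF (τ F G)) ∧
  (∀ F G H, DDF F → DDF G → DDF H → τ (τ F G) H = τ F (τ G H)) ∧
  (∀ F G, DDF F → DDF G → τ F G = τ G F) ∧
  (∀ F G H, DDF F → DDF G → DDF H → F ≤ G → τ F H ≤ τ G H) ∧
  (∀ F, DDF F → τ F eps0 = F) ∧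
  (∀ (Fn : ℕ → ℝ → ℝ) F G, (∀ n, DDF (Fn n)) → DDF F → DDF G →
    WeakConv Fn F → WeakConv (fun n => τ (Fn n) G) (τ F G))

/-- A probabilistic normed space `(V, ν, τ, τ*)`. -/
structure IsPNSpace (V : Type) [AddCommGroup V] [Module ℝ V]
    (ν : V → ℝ → ℝ) (τ τs : (ℝ → ℝ) → (ℝ → ℝ) → (ℝ → ℝ)) : Prop where
  ddf : ∀ p, DDF (ν p)
  tri : IsTriangleFunction τ
  tris : IsTriangleFunction τs
  tle : ∀ F G, DDF F → DDF G → τ F G ≤ τs F G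
  n1 : ∀ p, ν p = eps0 ↔ p = 0
  n2 : ∀ p, ν (-p) = ν p
  n3 : ∀ p q, τ (ν p) (ν q) ≤ ν (p + q)
  n4 : ∀ (p : V) (l : ℝ), 0 ≤ l → l ≤ 1 →
    ν p ≤ τs (ν (l • p)) (ν ((1 - l) • p))

/-- Archimedean triangle function: no idempotents besides `ε₀` and `ε∞`. -/
def IsArchimedean (τ : (ℝ → ℝ) → (ℝ → ℝ) → (ℝ → ℝ)) : Prop :=
  ∀ F, DDF F → τ F F = F → F = eps0 ∨ F = epsInf

/-- Strong convergence of a sequence in a PN space. -/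
def StrongConv {V : Type} [AddCommGroup V] (ν : V → ℝ → ℝ)
    (q : ℕ → V) (p : V) : Prop :=
  ∀ l : ℝ, 0 < l → ∀ᶠ n in atTop, ν (q n - p) l > 1 - l

/-- Strongly Cauchy sequence in a PN space. -/
def StrongCauchy {V : Type} [AddCommGroup V] (ν : V → ℝ → ℝ) (q : ℕ → V) : Prop :=
  ∀ l : ℝ, 0 < l → ∃ N, ∀ m n, N ≤ m → N ≤ n → ν (q m - q n) l > 1 - l

/-- `A` is `D`-bounded: some `G ∈ D⁺` lies below all `ν p`, `p ∈ A`. -/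
def DBounded {V : Type} (ν : V → ℝ → ℝ) (A : Set V) : Prop :=
  ∃ G : ℝ → ℝ, DDF G ∧ InDPlus G ∧ ∀ p ∈ A, G ≤ ν p

/-- `A` is `D`-compact: every sequence in `A` has a subsequence strongly
convergent to a point of `A`. -/
def DCompact {V : Type} [AddCommGroup V] (ν : V → ℝ → ℝ) (A : Set V) : Prop :=
  ∀ q : ℕ → V, (∀ n, q n ∈ A) → ∃ φ : ℕ → ℕ, StrictMono φ ∧
    ∃ p ∈ A, StrongConv ν (q ∘ φ) p

/-- `A` is closed under strong convergence of sequences. -/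
def SeqClosed {V : Type} [AddCommGroup V] (ν : V → ℝ → ℝ) (A : Set V) : Prop :=
  ∀ (q : ℕ → V) (p : V), (∀ n, q n ∈ A) → StrongConv ν q p → p ∈ A

/-- The probabilistic radius `R_A(x) = l⁻ inf {ν p x : p ∈ A}`. -/
def probRadius {V : Type} (ν : V → ℝ → ℝ) (A : Set V) (x : ℝ) : ℝ :=
  ⨆ y : Set.Iio x, ⨅ p : A, ν (p : V) (y : ℝ)

/-- If `ν(V) ⊆ D⁺`, `D⁺` is `τ`-invariant, and `p_m → p` strongly, then
`{p_m : m ∈ ℕ}` is `D`-bounded. -/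
lemma DDF.nonneg {F : ℝ → ℝ} (hF : DDF F) (x : ℝ) : 0 ≤ F x := by
  rcases le_or_gt x 0 with hx | hx
  · rw [hF.2.1 x hx]
  · have h0 : F 0 = 0 := hF.2.1 0 le_rfl
    calc (0:ℝ) = F 0 := h0.symm
    _ ≤ F x := hF.1 hx.le

theorem statement11 {V : Type} [AddCommGroup V] [Module ℝ V]
    (ν : V → ℝ → ℝ) (τ τs : (ℝ → ℝ) → (ℝ → ℝ) → (ℝ → ℝ))
    (h : IsPNSpace V ν τ τs)
    (hD : ∀ p : V, InDPlus (ν p))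
    (hInv : ∀ F G, DDF F → DDF G → InDPlus F → InDPlus G → InDPlus (τ F G))
    (q : ℕ → V) (p : V) (hc : StrongConv ν q p) :
    DBounded ν (Set.range q) := by
  classical
  set F : ℕ → ℝ → ℝ := fun n => ν (q n - p) with hFdef
  have hFd : ∀ n, DDF (F n) := fun n => h.ddf _
  have hFD : ∀ n, InDPlus (F n) := fun n => hD _
  set I : ℝ → ℝ := fun x => ⨅ n, F n x with hIdef
  have hbdd : ∀ x, BddBelow (Set.range fun n => F n x) := fun x =>
    ⟨0, by rintro _ ⟨n, rfl⟩; exact (hFd n).nonneg x⟩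
  have hI0 : ∀ x, 0 ≤ I x := fun x => le_ciInf fun n => (hFd n).nonneg x
  have hIle : ∀ x n, I x ≤ F n x := fun x n => ciInf_le (hbdd x) n
  have hI1 : ∀ x, I x ≤ 1 := fun x => (hIle x 0).trans ((hFd 0).2.2.1 x)
  set H : ℝ → ℝ := fun x => ⨆ y : Set.Iio x, I y.1 with hHdef
  haveI hne : ∀ x : ℝ, Nonempty (Set.Iio x) := fun x => ⟨⟨x - 1, by simp⟩⟩
  have hbddH : ∀ x, BddAbove (Set.range fun y : Set.Iio x => I y.1) := fun x =>
    ⟨1, by rintro _ ⟨y, rfl⟩; exact hI1 _⟩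
  have hHleI : ∀ (y x : ℝ), y < x → I y ≤ H x := fun y x hyx =>
    le_ciSup (hbddH x) ⟨y, hyx⟩
  have hHle : ∀ x n, H x ≤ F n x := fun x n =>
    ciSup_le fun y => (hIle y.1 n).trans ((hFd n).1 y.2.le)
  have hHmono : Monotone H := fun a b hab =>
    ciSup_le fun y => hHleI y.1 b (lt_of_lt_of_le y.2 hab)
  have hH1 : ∀ x, H x ≤ 1 := fun x => (hHle x 0).trans ((hFd 0).2.2.1 x)
  have hH0 : ∀ x, 0 ≤ H x := fun x => (hI0 (x - 1)).trans (hHleI _ _ (by linarith))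
  have hHzero : ∀ x ≤ 0, H x = 0 := fun x hx =>
    le_antisymm ((hHle x 0).trans_eq ((hFd 0).2.1 x hx)) (hH0 x)
  have hsup : ∀ x, sSup (H '' Set.Iio x) = H x := by
    intro x
    apply le_antisymm
    · refine csSup_le ⟨H (x - 1), ⟨x - 1, by simp, rfl⟩⟩ ?_
      rintro _ ⟨y, hy, rfl⟩
      exact hHmono hy.le
    · apply ciSup_le
      rintro ⟨y, hy⟩
      have hy' : y < x := hy
      have h2 : I y ≤ H ((y + x) / 2) := hHleI y _ (by linarith)
      refine h2.trans (le_csSup ⟨1, ?_⟩ ⟨(y + x) / 2, by simpa using by linarith, rfl⟩)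
      rintro _ ⟨z, hz, rfl⟩
      exact hH1 z
  have hHcont : ∀ x, Tendsto H (nhdsWithin x (Set.Iio x)) (nhds (H x)) := fun x => by
    have := hHmono.tendsto_nhdsLT x
    rwa [hsup x] at this
  have hHddf : DDF H := ⟨hHmono, hHzero, hH1, hHcont⟩
  have hHD : InDPlus H := by
    rw [InDPlus, tendsto_order]
    constructor
    · intro c hclt
      set m : ℝ := (c + 1) / 2 with hm
      have hcm : c < m := by rw [hm]; linarith
      have hm1 : m < 1 := by rw [hm]; linarith
      set ε : ℝ := 1 - m with hε
      have hεpos : 0 < ε := by rw [hε]; linarith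
      obtain ⟨N, hN⟩ := eventually_atTop.mp (hc ε hεpos)
      have hfin : ∀ᶠ x in atTop, ∀ n ∈ Finset.range N, m < F n x :=
        (eventually_all_finset _).2 fun n _ =>
          (hFD n).eventually (eventually_gt_nhds hm1)
      obtain ⟨X, hX⟩ := eventually_atTop.mp (hfin.and (eventually_ge_atTop ε))
      have hIX : m ≤ I X := by
        apply le_ciInf
        intro n
        by_cases hn : n < N
        · exact ((hX X le_rfl).1 n (Finset.mem_range.2 hn)).le
        · have h1 : 1 - ε < F n ε := hN n (not_lt.1 hn)
          have h2 : F n ε ≤ F n X := (hFd n).1 (hX X le_rfl).2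
          have h3 : (1 : ℝ) - ε = m := by rw [hε]; ring
          linarith
      filter_upwards [eventually_gt_atTop X] with x hx
      exact lt_of_lt_of_le hcm (hIX.trans (hHleI X x hx))
    · intro c hc1
      exact Eventually.of_forall fun x => lt_of_le_of_lt (hH1 x) hc1
  refine ⟨τ H (ν p), h.tri.1 H (ν p) hHddf (h.ddf p),
    hInv H (ν p) hHddf (h.ddf p) hHD (hD p), ?_⟩
  rintro _ ⟨n, rfl⟩
  have hmono : τ H (ν p) ≤ τ (F n) (ν p) :=
    h.tri.2.2.2.1 H (F n) (ν p) hHddf (hFd n) (h.ddf p) (fun x => hHle x n)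
  have h3 := h.n3 (q n - p) p
  have heq : q n - p + p = q n := by abel
  rw [heq] at h3
  exact hmono.trans h3
end
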